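/- Let M be a nondegenerate integral lattice (a free abelian group of finite rank with a nondegenerate symmetric bilinear integer-valued form), and let v ∈ M with v·v ≠ 0. Let d = gcd{v·w : w ∈ M}. Then det(v^⊥) = (v·v / d²) · det(M), where v^⊥ is the orthogonal complement of v in M and det denotes the absolute value of the determinant of a Gram matrix. -/

import Mathlib

open BigOperators Matrix

/-- The bilinear form on `Fin n → ℤ` determined by the Gram matrix `A`. -/
def bilin (n : ℕ) (A : Matrix (Fin n) (Fin n) ℤ) (x y : Fin n → ℤ) : ℤ :=
  x ⬝ᵥ A.mulVec y

/-- The orthogonal complement of `v` in the lattice `(Fin n → ℤ, A)`. -/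
def perp (n : ℕ) (A : Matrix (Fin n) (Fin n) ℤ) (v : Fin n → ℤ) :
    Submodule ℤ (Fin n → ℤ) where
  carrier := {x | bilin n A v x = 0}
  add_mem' := by
    intro a b ha hb
    simp only [Set.mem_setOf_eq, bilin, Matrix.mulVec_add, dotProduct_add] at *
    omega
  zero_mem' := by simp [bilin]
  smul_mem' := by
    intro c x hx
    simp only [Set.mem_setOf_eq, bilin] at *
    rw [Matrix.mulVec_smul, dotProduct_smul, hx, smul_zero]

section aux

variable {n : ℕ} {A : Matrix (Fin n) (Fin n) ℤ} {v : Fin n → ℤ}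

lemma mem_perp {x : Fin n → ℤ} : x ∈ perp n A v ↔ bilin n A v x = 0 := Iff.rfl

lemma bilin_sub_right (x y z : Fin n → ℤ) :
    bilin n A x (y - z) = bilin n A x y - bilin n A x z := by
  simp [bilin, Matrix.mulVec_sub, dotProduct_sub]

lemma bilin_smul_right (c : ℤ) (x y : Fin n → ℤ) :
    bilin n A x (c • y) = c * bilin n A x y := by
  rw [bilin, Matrix.mulVec_smul, dotProduct_smul, smul_eq_mul, bilin]

lemma bilin_comm (hA : A.IsSymm) (x y : Fin n → ℤ) : bilin n A x y = bilin n A y x := by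
  rw [bilin, Matrix.dotProduct_mulVec, ← Matrix.mulVec_transpose, hA.eq,
    dotProduct_comm, bilin]

lemma gram_eq {k : ℕ} (f : Fin k → (Fin n → ℤ)) :
    (Matrix.of fun i j => bilin n A (f i) (f j)) = Matrix.of f * A * (Matrix.of f)ᵀ := by
  ext i j
  simp only [Matrix.of_apply, bilin, Matrix.mul_apply, Matrix.transpose_apply,
    Matrix.mulVec, dotProduct, Finset.sum_mul, Finset.mul_sum]
  rw [Finset.sum_comm]
  exact Finset.sum_congr rfl fun p _ => Finset.sum_congr rfl fun q _ => by ring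

end aux

theorem stmt0 (n : ℕ) (A : Matrix (Fin n) (Fin n) ℤ) (hA : A.IsSymm)
    (hnd : A.det ≠ 0) (v : Fin n → ℤ) (hv : bilin n A v v ≠ 0)
    (d : ℤ) (hd : 0 < d) (hdvd : ∀ w, d ∣ bilin n A v w)
    (hmem : ∃ w, bilin n A v w = d)
    (b : Module.Basis (Fin (n - 1)) ℤ (perp n A v)) :
    ((Matrix.of fun i j => bilin n A (b i) (b j)).det).natAbs * d.natAbs ^ 2
      = (bilin n A v v).natAbs * A.det.natAbs := by
  obtain ⟨m, rfl⟩ : ∃ m, n = m + 1 := by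
    cases n with
    | zero => simp [bilin, dotProduct] at hv
    | succ m => exact ⟨m, rfl⟩
  obtain ⟨w₀, hw₀⟩ := hmem
  -- the vectors of the basis of the perp, as elements of ℤ^(m+1)
  let bv : Fin m → (Fin (m + 1) → ℤ) := fun i => (b i : Fin (m + 1) → ℤ)
  have hbperp : ∀ i, bilin (m + 1) A v (bv i) = 0 := fun i => (b i).2
  have hrepr : ∀ (x : perp (m + 1) A v) (l : Fin (m + 1)),
      ∑ i : Fin m, b.repr x i * bv i l = (x : Fin (m + 1) → ℤ) l := by
    intro x l
    have h := congrArg (fun y : perp (m + 1) A v => (y : Fin (m + 1) → ℤ) l) (b.sum_repr x)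
    simp only [Submodule.coe_sum, Finset.sum_apply, Submodule.coe_smul, Pi.smul_apply, smul_eq_mul] at h
    exact h
  let f : Fin (m + 1) → (Fin (m + 1) → ℤ) := Fin.cons w₀ bv
  let P : Matrix (Fin (m + 1)) (Fin (m + 1)) ℤ := Matrix.of f
  -- left inverse of P
  let k : Fin (m + 1) → ℤ := fun j => bilin (m + 1) A v (Pi.single j 1) / d
  have hk : ∀ j, d * k j = bilin (m + 1) A v (Pi.single j 1) := fun j => by
    rw [mul_comm]; exact Int.ediv_mul_cancel (hdvd _)
  have hp : ∀ j, (Pi.single j 1 - k j • w₀ : Fin (m + 1) → ℤ) ∈ perp (m + 1) A v := by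
    intro j
    rw [mem_perp, bilin_sub_right, bilin_smul_right, hw₀, ← hk j]
    ring
  let pe : Fin (m + 1) → perp (m + 1) A v := fun j => ⟨_, hp j⟩
  let Q : Matrix (Fin (m + 1)) (Fin (m + 1)) ℤ :=
    Matrix.of fun j => Fin.cons (k j) (fun i => b.repr (pe j) i)
  have hQP : Q * P = 1 := by
    ext j l
    rw [Matrix.mul_apply, Fin.sum_univ_succ]
    simp only [Q, P, f, Matrix.of_apply, Fin.cons_zero, Fin.cons_succ]
    rw [hrepr (pe j) l]
    simp only [pe, Pi.sub_apply, Pi.smul_apply, smul_eq_mul]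
    rw [Matrix.one_apply]
    simp only [Pi.single_apply]
    by_cases h : j = l
    · rw [if_pos (h ▸ rfl : l = j), if_pos h]; ring
    · rw [if_neg (fun hh : l = j => h hh.symm), if_neg h]; ring
  have hPdet : P.det = 1 ∨ P.det = -1 := by
    have h1 : P.det * Q.det = 1 := by
      rw [mul_comm, ← Matrix.det_mul, hQP, Matrix.det_one]
    exact Int.isUnit_iff.mp (IsUnit.of_mul_eq_one _ h1)
  -- decompose v
  let a : ℤ := bilin (m + 1) A v v / d
  have ha : d * a = bilin (m + 1) A v v := by
    rw [mul_comm]; exact Int.ediv_mul_cancel (hdvd _)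
  have hpv : (v - a • w₀ : Fin (m + 1) → ℤ) ∈ perp (m + 1) A v := by
    rw [mem_perp, bilin_sub_right, bilin_smul_right, hw₀]
    rw [← ha]
    ring
  let pv : perp (m + 1) A v := ⟨_, hpv⟩
  let R : Matrix (Fin (m + 1)) (Fin (m + 1)) ℤ :=
    Matrix.of (Fin.cons (Fin.cons a (fun i => b.repr pv i))
      (fun i => Pi.single i.succ 1))
  have hRtri : R.BlockTriangular id := by
    intro i j hij
    refine Fin.cases ?_ (fun i' hij => ?_) i hij
    · intro hij; exact absurd hij (by simp)
    · simp only [R, Matrix.of_apply, Fin.cons_succ]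
      exact Pi.single_eq_of_ne (ne_of_lt hij) 1
  have hRdet : R.det = a := by
    rw [Matrix.det_of_upperTriangular hRtri, Fin.prod_univ_succ]
    simp [R, Fin.cons_zero, Fin.cons_succ, Pi.single_eq_same]
  let g : Fin (m + 1) → (Fin (m + 1) → ℤ) := Fin.cons v bv
  have hRP : R * P = Matrix.of g := by
    ext i l
    refine Fin.cases ?_ (fun i' => ?_) i
    · rw [Matrix.mul_apply, Fin.sum_univ_succ]
      simp only [R, P, f, g, Matrix.of_apply, Fin.cons_zero, Fin.cons_succ]
      rw [hrepr pv l]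
      simp only [pv, Pi.sub_apply, Pi.smul_apply, smul_eq_mul]
      ring
    · rw [Matrix.mul_apply]
      simp only [R, P, g, f, Matrix.of_apply, Fin.cons_succ]
      simp [Pi.single_apply, ite_mul]
  -- the Gram matrix of (v, b)
  have hG' : (Matrix.of fun i j => bilin (m + 1) A (g i) (g j)) = R * P * A * (R * P)ᵀ := by
    rw [hRP]; exact gram_eq g
  have hdetG' : (Matrix.of fun i j => bilin (m + 1) A (g i) (g j)).det
      = a ^ 2 * P.det ^ 2 * A.det := by
    rw [hG']
    rw [Matrix.det_mul, Matrix.det_mul, Matrix.det_transpose, Matrix.det_mul, hRdet]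
    ring
  -- block structure
  have hblock : (Matrix.of fun i j => bilin (m + 1) A (g i) (g j)).det
      = bilin (m + 1) A v v
        * ((Matrix.of fun i j => bilin (m + 1) A (b i) (b j)).det) := by
    rw [Matrix.det_succ_row_zero, Fin.sum_univ_succ]
    have hz : ∀ j : Fin m,
        bilin (m + 1) A (g 0) (g j.succ) = 0 := by
      intro j
      simp only [g, Fin.cons_zero, Fin.cons_succ]
      exact hbperp j
    rw [Finset.sum_eq_zero (fun j _ => by
      simp only [Matrix.of_apply]
      rw [hz j]; ring)]
    simp only [Matrix.of_apply, Fin.succAbove_zero, g, Fin.cons_zero, add_zero]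
    have hsub : ((Matrix.of fun i j => bilin (m + 1) A (g i) (g j)).submatrix
        Fin.succ Fin.succ) = (Matrix.of fun i j => bilin (m + 1) A (b i) (b j)) := by
      ext i j
      simp [g, Fin.cons_succ, bv]
    rw [show ((-1 : ℤ) ^ ((0 : Fin (m+1)) : ℕ)) = 1 by simp, one_mul]
    rw [hsub]
  -- put it together
  have hP2 : P.det ^ 2 = 1 := by rcases hPdet with h | h <;> rw [h] <;> ring
  have key : bilin (m + 1) A v v
      * ((Matrix.of fun i j => bilin (m + 1) A (b i) (b j)).det) = a ^ 2 * A.det := by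
    rw [← hblock, hdetG', hP2]; ring
  set G := (Matrix.of fun i j => bilin (m + 1) A (b i) (b j)).det with hG
  apply Nat.eq_of_mul_eq_mul_left (Int.natAbs_pos.mpr hv)
  have h2 : (bilin (m+1) A v v).natAbs * (G.natAbs * d.natAbs ^ 2)
      = ((bilin (m+1) A v v * G) * d ^ 2).natAbs := by
    rw [Int.natAbs_mul, Int.natAbs_mul, Int.natAbs_pow]
    ring
  have h3 : (bilin (m+1) A v v * G) * d ^ 2 = (bilin (m+1) A v v) ^ 2 * A.det := by
    rw [key, ← ha]; ring
  rw [h2, h3, Int.natAbs_mul, Int.natAbs_pow]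
  ring
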